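/- arXiv:2007.06438 — 3 statements merged into one kernel-verified Lean document; each statement's English description precedes it below -/
import Mathlib

section
/- Let G be a reflexive graph (every vertex is looped), Π = Π(G) its fundamental groupoid, and E = ev(Π(G)) its even subgroupoid (same objects, arrows the ≡-classes of even-length walks). Then the map Ψ: Π → E × ℤ/2 sending an even class α to (α, 0) and an odd class α, represented by a walk ending at vertex vₙ, to (the class of α with vₙ appended once more, 1), is an isomorphism of groupoids; hence Π(G) ≅ ev(Π(G)) × ℤ/2. -/
/-- A graph: vertex type `V` with a symmetric adjacency relation (loops allowed). -/
structure LoopGraph (V : Type) where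
  Adj : V → V → Prop
  symm : Symmetric Adj

variable {V W X : Type}

/-- `l` is the (nonempty) vertex sequence of a walk in `G`. -/
def IsWalk (G : LoopGraph V) (l : List V) : Prop :=
  l ≠ [] ∧ l.Chain' G.Adj

/-- `l` is a walk in `G` from `x` to `y`. -/
def IsWalkFrom (G : LoopGraph V) (x y : V) (l : List V) : Prop :=
  l.Chain' G.Adj ∧ l.head? = some x ∧ l.getLast? = some y

/-- Concatenation of walks sharing an endpoint: follow `l`, then `m`. -/
def wconcat (l m : List V) : List V := l ++ m.tail

/-- A walk is prunable if some vertex `vᵢ` satisfies `vᵢ = vᵢ₊₂`. -/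
def Prunable (l : List V) : Prop :=
  ∃ (p s : List V) (a b : V), l = p ++ a :: b :: a :: s

/-- `m` is obtained from `l` by a single prune (deleting `vᵢ, vᵢ₊₁` when `vᵢ = vᵢ₊₂`). -/
def PruneOf (l m : List V) : Prop :=
  ∃ (p s : List V) (a b : V), l = p ++ a :: b :: a :: s ∧ m = p ++ a :: s

/-- A single prune step (in either direction) between walks of `G`. -/
def PruneStep (G : LoopGraph V) (l m : List V) : Prop :=
  IsWalk G l ∧ IsWalk G m ∧ (PruneOf l m ∨ PruneOf m l)

/-- Prune equivalence: the equivalence relation on walks of `G` generated by prunes. -/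
def PruneEqv (G : LoopGraph V) : List V → List V → Prop :=
  Relation.EqvGen (PruneStep G)

/-- A spider move: two walks of `G` of the same length which agree at every index
except (at most) a single interior index. -/
def SpiderStep (G : LoopGraph V) (l m : List V) : Prop :=
  IsWalk G l ∧ IsWalk G m ∧ l.length = m.length ∧
    ∃ i : ℕ, 0 < i ∧ i + 1 < l.length ∧ ∀ j : ℕ, j ≠ i → l[j]? = m[j]?

/-- Homotopy rel endpoints (`≡`): the equivalence relation on walks of `G`
generated by prunes and spider moves. -/
def HomEqv (G : LoopGraph V) : List V → List V → Prop :=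
  Relation.EqvGen (fun l m => PruneStep G l m ∨ SpiderStep G l m)

/-- A graph morphism. -/
def IsHom (G : LoopGraph V) (H : LoopGraph W) (f : V → W) : Prop :=
  ∀ {u v : V}, G.Adj u v → H.Adj (f u) (f v)

/-- One step of a ×-homotopy between graph morphisms. -/
def HtpyStep (G : LoopGraph V) (H : LoopGraph W) (f g : V → W) : Prop :=
  IsHom G H f ∧ IsHom G H g ∧ ∀ u v, G.Adj u v → H.Adj (f u) (g v)

/-- ×-homotopy of graph morphisms. -/
def Homotopic (G : LoopGraph V) (H : LoopGraph W) : (V → W) → (V → W) → Prop :=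
  Relation.ReflTransGen (HtpyStep G H)

/-- `evenize` of a walk: the walk itself if it has even length (odd list length),
otherwise the walk with its last vertex repeated once more (an even walk, using the
loop at the last vertex in a reflexive graph). -/
def evenize (l : List V) : List V :=
  if l.length % 2 = 1 then l else l ++ l.getLast?.toList

-- helpers
lemma eq_concat_of_getLast? {l : List V} {a : V} (h : l.getLast? = some a) :
    ∃ p, l = p ++ [a] := by
  rcases List.eq_nil_or_concat l with rfl | ⟨p, b, rfl⟩
  · simp at h
  · simp only [List.concat_eq_append, List.getLast?_concat, Option.some.injEq] at h
    exact ⟨p, by simp [h]⟩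

lemma homEqv_refl (G : LoopGraph V) (l : List V) : HomEqv G l l := Relation.EqvGen.refl l
lemma HomEqv.symm {G : LoopGraph V} {l m : List V} (h : HomEqv G l m) : HomEqv G m l :=
  Relation.EqvGen.symm _ _ h
lemma HomEqv.trans {G : LoopGraph V} {l m n : List V} (h : HomEqv G l m) (h' : HomEqv G m n) :
    HomEqv G l n := Relation.EqvGen.trans _ _ _ h h'

lemma pruneOf_inv {l m : List V} (h : PruneOf l m) :
    l.head? = m.head? ∧ l.getLast? = m.getLast? ∧ l.length % 2 = m.length % 2 := by
  obtain ⟨p, s, a, b, rfl, rfl⟩ := h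
  refine ⟨?_, ?_, by simp; omega⟩
  · simp [List.head?_append]
  · rcases List.eq_nil_or_concat s with rfl | ⟨t, c, rfl⟩ <;>
      simp [List.getLast?_append, List.getLast?_concat]

lemma step_inv {G : LoopGraph V} {l m : List V}
    (h : PruneStep G l m ∨ SpiderStep G l m) :
    l.head? = m.head? ∧ l.getLast? = m.getLast? ∧ l.length % 2 = m.length % 2 := by
  rcases h with ⟨_, _, h | h⟩ | ⟨_, _, hlen, i, hi0, hi1, hj⟩
  · exact pruneOf_inv h
  · obtain ⟨h1, h2, h3⟩ := pruneOf_inv h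
    exact ⟨h1.symm, h2.symm, h3.symm⟩
  · refine ⟨?_, ?_, by omega⟩
    · rw [List.head?_eq_getElem?, List.head?_eq_getElem?]
      exact hj 0 (by omega)
    · rw [List.getLast?_eq_getElem?, List.getLast?_eq_getElem?, hlen]
      exact hj (m.length - 1) (by omega)

lemma homEqv_inv {G : LoopGraph V} {l m : List V} (h : HomEqv G l m) :
    l.head? = m.head? ∧ l.getLast? = m.getLast? ∧ l.length % 2 = m.length % 2 := by
  induction h with
  | rel _ _ h => exact step_inv h
  | refl => exact ⟨rfl, rfl, rfl⟩
  | symm _ _ _ ih => exact ⟨ih.1.symm, ih.2.1.symm, ih.2.2.symm⟩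
  | trans _ _ _ _ _ ih1 ih2 =>
      exact ⟨ih1.1.trans ih2.1, ih1.2.1.trans ih2.2.1, ih1.2.2.trans ih2.2.2⟩

/-- appending the last vertex keeps walkness, in a reflexive graph. -/
lemma isWalk_append_last {G : LoopGraph V} (hrefl : ∀ v, G.Adj v v) {l : List V} {y : V}
    (hw : IsWalk G l) (hy : l.getLast? = some y) : IsWalk G (l ++ [y]) := by
  refine ⟨by simp, List.isChain_append.2 ⟨hw.2, List.isChain_singleton y, ?_⟩⟩
  intro a ha b hb
  simp only [hy, Option.mem_def, Option.some.injEq, List.head?_cons] at ha hb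
  subst ha; subst hb; exact hrefl y

/-- HomEqv is a congruence for appending the common last vertex. -/
lemma homEqv_append_last {G : LoopGraph V} (hrefl : ∀ v, G.Adj v v) {y : V} :
    ∀ {l m : List V}, HomEqv G l m → l.getLast? = some y →
    HomEqv G (l ++ [y]) (m ++ [y]) := by
  intro l m h
  induction h with
  | rel l m h =>
      intro hy
      have hym : m.getLast? = some y := (step_inv h).2.1 ▸ hy
      refine Relation.EqvGen.rel _ _ ?_
      rcases h with ⟨hl, hm, h⟩ | ⟨hl, hm, hlen, i, hi0, hi1, hj⟩
      · refine Or.inl ⟨isWalk_append_last hrefl hl hy, isWalk_append_last hrefl hm hym, ?_⟩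
        rcases h with ⟨p, s, a, b, rfl, rfl⟩ | ⟨p, s, a, b, rfl, rfl⟩
        · exact Or.inl ⟨p, s ++ [y], a, b, by simp, by simp⟩
        · exact Or.inr ⟨p, s ++ [y], a, b, by simp, by simp⟩
      · refine Or.inr ⟨isWalk_append_last hrefl hl hy, isWalk_append_last hrefl hm hym,
          by simp [hlen], i, hi0, by simp; omega, ?_⟩
        intro j hj'
        rcases lt_or_ge j l.length with hlt | hge
        · rw [List.getElem?_append_left hlt, List.getElem?_append_left (hlen ▸ hlt)]
          exact hj j hj'
        · rw [List.getElem?_append_right hge, List.getElem?_append_right (hlen ▸ hge), hlen]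
  | refl l => intro _; exact Relation.EqvGen.refl _
  | symm l m h ih =>
      intro hy
      have hyl : l.getLast? = some y := (homEqv_inv h).2.1.trans hy
      exact (ih hyl).symm
  | trans l m n h1 h2 ih1 ih2 =>
      intro hy
      have hym : m.getLast? = some y := (homEqv_inv h1).2.1 ▸ hy
      exact (ih1 hy).trans (ih2 hym)

/-- pruning a doubled trailing vertex. -/
lemma homEqv_append_two {G : LoopGraph V} (hrefl : ∀ v, G.Adj v v) {l : List V} {y : V}
    (hw : IsWalk G l) (hy : l.getLast? = some y) : HomEqv G (l ++ [y, y]) l := by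
  obtain ⟨p, rfl⟩ := eq_concat_of_getLast? hy
  refine Relation.EqvGen.rel _ _ (Or.inl ⟨?_, hw, Or.inl ⟨p, [], y, y, by simp, by simp⟩⟩)
  have h1 : IsWalk G (p ++ [y] ++ [y]) := isWalk_append_last hrefl hw hy
  have h2 := isWalk_append_last hrefl h1
    (show (p ++ [y] ++ [y]).getLast? = some y by simp [List.getLast?_concat])
  simpa [List.append_assoc] using h2

/-- duplicate the vertex at index `k`. -/
def dup (k : ℕ) (l : List V) : List V := l.take (k + 1) ++ l.drop k

lemma dup_length {k : ℕ} {l : List V} (hk : k < l.length) :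
    (dup k l).length = l.length + 1 := by
  simp [dup]; omega

lemma dup_getElem? {k : ℕ} {l : List V} (hk : k < l.length) (j : ℕ) :
    (dup k l)[j]? = if j ≤ k then l[j]? else l[j-1]? := by
  unfold dup
  have htl : (l.take (k+1)).length = k + 1 := by simp; omega
  rcases le_or_gt j k with hj | hj
  · rw [List.getElem?_append_left (by omega), List.getElem?_take, if_pos (by omega), if_pos hj]
  · rw [List.getElem?_append_right (by omega), htl, List.getElem?_drop, if_neg (by omega)]
    congr 1
    omega

lemma dup_isWalk {G : LoopGraph V} (hrefl : ∀ v, G.Adj v v) {k : ℕ} {l : List V}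
    (hw : IsWalk G l) (hk : k < l.length) : IsWalk G (dup k l) := by
  refine ⟨by simp [dup]; omega, List.isChain_append.2 ⟨hw.2.take _, hw.2.drop _, ?_⟩⟩
  intro a ha b hb
  have h1 : (l.take (k+1)).getLast? = l[k]? := by
    rw [List.getLast?_eq_getElem?, List.getElem?_take]
    simp only [List.length_take]
    rw [if_pos (by omega)]
    congr 1
    omega
  have h2 : (l.drop k).head? = l[k]? := by
    rw [List.head?_eq_getElem?, List.getElem?_drop]; norm_num
  rw [Option.mem_def, h1, List.getElem?_eq_getElem hk, Option.some.injEq] at ha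
  rw [Option.mem_def, h2, List.getElem?_eq_getElem hk, Option.some.injEq] at hb
  subst ha; subst hb; exact hrefl _

lemma dup_spider {G : LoopGraph V} (hrefl : ∀ v, G.Adj v v) {k : ℕ} {l : List V}
    (hw : IsWalk G l) (hk : k + 1 < l.length) :
    SpiderStep G (dup k l) (dup (k+1) l) := by
  refine ⟨dup_isWalk hrefl hw (by omega), dup_isWalk hrefl hw hk,
    by rw [dup_length (by omega), dup_length hk], k+1, by omega,
    by rw [dup_length (by omega)]; omega, ?_⟩
  intro j hj
  rw [dup_getElem? (by omega) j, dup_getElem? hk j]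
  rcases le_or_gt j k with h | h
  · rw [if_pos h, if_pos (by omega)]
  · rw [if_neg (by omega), if_neg (by omega)]

lemma dup_homEqv {G : LoopGraph V} (hrefl : ∀ v, G.Adj v v) {l : List V}
    (hw : IsWalk G l) : ∀ {k j : ℕ}, k ≤ j → j < l.length →
    HomEqv G (dup k l) (dup j l) := by
  intro k j
  induction j with
  | zero => intro hkj _; interval_cases k; exact homEqv_refl _ _
  | succ j ih =>
      intro hkj hjl
      rcases Nat.lt_or_ge k (j+1) with h | h
      · exact (ih (by omega) (by omega)).trans
          (Relation.EqvGen.rel _ _ (Or.inr (dup_spider hrefl hw hjl)))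
      · have : k = j + 1 := by omega
        subst this; exact homEqv_refl _ _

lemma dup_last {l : List V} {p : List V} {z : V} (h : l = p ++ [z]) :
    dup (l.length - 1) l = l ++ [z] := by
  subst h
  simp only [dup, List.length_append, List.length_singleton]
  rw [Nat.add_sub_cancel, List.take_of_length_le (by simp), List.drop_append_of_le_length (le_refl _)]
  simp

lemma dup_mid {t a' : List V} {y : V} {α : List V} (h : α = a' ++ [y]) :
    dup (α.length - 1) (α ++ t) = α ++ y :: t := by
  subst h
  have h1 : (a' ++ [y]).length - 1 = a'.length := by simp
  rw [dup, h1]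
  have h2 : a'.length + 1 = (a' ++ [y]).length := by simp
  rw [h2, List.take_left, List.append_assoc a' [y] t, List.drop_left]
  simp

lemma walkfrom_nonempty {G : LoopGraph V} {x y : V} {l : List V} (h : IsWalkFrom G x y l) :
    l ≠ [] := by
  intro hl; subst hl; simp [IsWalkFrom] at h

lemma walkfrom_isWalk {G : LoopGraph V} {x y : V} {l : List V} (h : IsWalkFrom G x y l) :
    IsWalk G l := ⟨walkfrom_nonempty h, h.1⟩


/-- for a reflexive graph `G`, the map `Ψ : Π(G) → ev(Π(G)) × ℤ/2`,
sending a class `α` to (its evenization, its parity), is an isomorphism of groupoids: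
it is well-defined and injective on `≡`-classes of walks between any two fixed
vertices (first clause, an iff), surjective (second clause; evenization of an even
walk is itself, so only the odd fibre needs checking), and multiplicative with respect
to concatenation (third clause; parities add automatically). -/
theorem stmt16 (G : LoopGraph V) (hrefl : ∀ v : V, G.Adj v v) :
    (∀ (x y : V) (α β : List V), IsWalkFrom G x y α → IsWalkFrom G x y β →
      (HomEqv G α β ↔
        (α.length % 2 = β.length % 2 ∧ HomEqv G (evenize α) (evenize β)))) ∧
    (∀ (x y : V) (α : List V), IsWalkFrom G x y α → α.length % 2 = 1 →
      ∃ β : List V, IsWalkFrom G x y β ∧ β.length % 2 = 0 ∧ HomEqv G (evenize β) α) ∧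
    (∀ (x y z : V) (α β : List V), IsWalkFrom G x y α → IsWalkFrom G y z β →
      HomEqv G (evenize (wconcat α β)) (wconcat (evenize α) (evenize β))) := by
  refine ⟨?_, ?_, ?_⟩
  · -- clause 1
    intro x y α β hα hβ
    constructor
    · intro h
      have hpar := (homEqv_inv h).2.2
      refine ⟨hpar, ?_⟩
      by_cases hp : α.length % 2 = 1
      · rw [evenize, if_pos hp, evenize, if_pos (hpar ▸ hp)]
        exact h
      · rw [evenize, if_neg hp, evenize, if_neg (hpar ▸ hp), hα.2.2, hβ.2.2]
        exact homEqv_append_last hrefl h hα.2.2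
    · rintro ⟨hpar, he⟩
      by_cases hp : α.length % 2 = 1
      · rwa [evenize, if_pos hp, evenize, if_pos (hpar ▸ hp)] at he
      · rw [evenize, if_neg hp, evenize, if_neg (hpar ▸ hp), hα.2.2, hβ.2.2] at he
        simp only [Option.toList_some] at he
        have h2 := homEqv_append_last hrefl he (List.getLast?_concat (l := α))
        have hαw : HomEqv G α (α ++ [y] ++ [y]) := by
          have := (homEqv_append_two hrefl (walkfrom_isWalk hα) hα.2.2).symm
          simpa [List.append_assoc] using this
        have hβw : HomEqv G (β ++ [y] ++ [y]) β := by
          have := homEqv_append_two hrefl (walkfrom_isWalk hβ) hβ.2.2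
          simpa [List.append_assoc] using this
        exact (hαw.trans h2).trans hβw
  · -- clause 2
    intro x y α hα hodd
    refine ⟨α ++ [y], ⟨(isWalk_append_last hrefl (walkfrom_isWalk hα) hα.2.2).2, ?_,
      List.getLast?_concat (l := α)⟩, by simp; omega, ?_⟩
    · rw [List.head?_append, hα.2.1]; rfl
    · rw [evenize, if_neg (by simp; omega), List.getLast?_concat]
      simp only [Option.toList_some]
      have := homEqv_append_two hrefl (walkfrom_isWalk hα) hα.2.2
      simpa [List.append_assoc] using this
  · -- clause 3
    intro x y z α β hα hβ
    obtain ⟨a', hαd⟩ := eq_concat_of_getLast? hα.2.2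
    rcases β with _ | ⟨b, t⟩
    · simp [IsWalkFrom] at hβ
    obtain rfl : y = b := by
      have := hβ.2.1
      simpa using this.symm
    have hwchain : (α ++ t).Chain' G.Adj := by
      refine List.isChain_append.2 ⟨hα.1, (List.isChain_cons.1 hβ.1).2, ?_⟩
      intro a ha c hc
      rw [Option.mem_def, hα.2.2, Option.some.injEq] at ha
      subst ha
      exact (List.isChain_cons.1 hβ.1).1 c hc
    have hwwalk : IsWalk G (α ++ t) := ⟨by simp [walkfrom_nonempty hα], hwchain⟩
    have hwlast : (α ++ t).getLast? = some z := by
      rcases List.eq_nil_or_concat t with rfl | ⟨t', c, rfl⟩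
      · rw [List.append_nil, hα.2.2]
        have := hβ.2.2
        simpa using this
      · have h0 := hβ.2.2
        rw [List.concat_eq_append,
          show y :: (t' ++ [c]) = (y :: t') ++ [c] from rfl, List.getLast?_concat] at h0
        rw [List.concat_eq_append, ← List.append_assoc, List.getLast?_concat]
        exact h0
    have hαlen : 1 ≤ α.length := by
      rcases α with _ | _
      · exact absurd rfl (walkfrom_nonempty hα)
      · simp
    have hwc : wconcat α (y :: t) = α ++ t := rfl
    by_cases hpa : α.length % 2 = 1 <;> by_cases hpb : (y :: t).length % 2 = 1 <;>
      simp only [List.length_cons] at hpb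
    · -- both odd list length
      rw [evenize, if_pos (by simp [wconcat]; omega), evenize, if_pos hpa, evenize,
        if_pos (by simp; omega)]
      exact homEqv_refl _ _
    · -- α odd, β even
      rw [evenize, if_neg (by simp [wconcat]; omega), hwc, hwlast, evenize, if_pos hpa,
        evenize, if_neg (by simp; omega), hβ.2.2]
      simp only [Option.toList_some]
      rw [wconcat, show ((y :: t) ++ [z]).tail = t ++ [z] from rfl, ← List.append_assoc]
      exact homEqv_refl _ _
    · -- α even, β odd
      rw [evenize, if_neg (by simp [wconcat]; omega), hwc, hwlast, evenize, if_neg hpa,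
        evenize, if_pos (by simp; omega), hα.2.2]
      simp only [Option.toList_some]
      rw [wconcat, show (y :: t).tail = t from rfl,
        show α ++ [y] ++ t = α ++ y :: t by simp, ← dup_mid hαd]
      obtain ⟨w', hw'⟩ := eq_concat_of_getLast? hwlast
      rw [← dup_last hw']
      exact (dup_homEqv hrefl hwwalk (by simp; omega) (by simp; omega)).symm
    · -- both even
      rw [evenize, if_pos (by simp [wconcat]; omega), hwc, evenize, if_neg hpa, evenize,
        if_neg (by simp; omega), hα.2.2, hβ.2.2]
      simp only [Option.toList_some]
      rw [wconcat, show ((y :: t) ++ [z]).tail = t ++ [z] from rfl,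
        show α ++ [y] ++ (t ++ [z]) = α ++ y :: (t ++ [z]) by simp,
        ← dup_mid (t := t ++ [z]) hαd]
      have hwzwalk : IsWalk G ((α ++ t) ++ [z]) := isWalk_append_last hrefl hwwalk hwlast
      have h1 : HomEqv G (dup (α.length - 1) ((α ++ t) ++ [z]))
          (dup (((α ++ t) ++ [z]).length - 1) ((α ++ t) ++ [z])) :=
        dup_homEqv hrefl hwzwalk (by simp; omega) (by simp)
      have h2 : dup (((α ++ t) ++ [z]).length - 1) ((α ++ t) ++ [z])
          = (α ++ t) ++ [z, z] := by
        rw [dup_last (p := α ++ t) (z := z) rfl]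
        simp
      rw [h2] at h1
      have h3 : HomEqv G ((α ++ t) ++ [z, z]) (α ++ t) :=
        homEqv_append_two hrefl hwwalk hwlast
      have h4 : α ++ (t ++ [z]) = (α ++ t) ++ [z] := by rw [List.append_assoc]
      rw [h4]
      exact (h1.trans h3).symm
end

section
/- Van Kampen theorem for graphs: suppose G = G₁ ∪ G₂ (G₁, G₂ subgraphs whose union of vertices and edges is G) and every diamond of G (induced 4-cycle / closed walk of length 4) is entirely contained in G₁ or in G₂. Then Π(G) is the pushout Π(G₁) *_{Π(G₁ ∩ G₂)} Π(G₂): for any groupoid R and functors φ₁: Π(G₁) → R and φ₂: Π(G₂) → R whose restrictions to Π(G₁ ∩ G₂) agree, there is a unique functor φ: Π(G) → R whose restrictions to Π(G₁) and Π(G₂) (along the inclusions) are φ₁ and φ₂. -/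
variable {V W X : Type}

open CategoryTheory

/-- A walk lying in the subgraph of `G` with vertex set `S` and edge relation `A`. -/
def IsWalkOn (S : Set V) (A : V → V → Prop) (l : List V) : Prop :=
  l ≠ [] ∧ (∀ u ∈ l, u ∈ S) ∧ l.Chain' A

/-- A walk from `x` to `y` lying in the subgraph `(S, A)`. -/
def IsWalkOnFrom (S : Set V) (A : V → V → Prop) (x y : V) (l : List V) : Prop :=
  (∀ u ∈ l, u ∈ S) ∧ l.Chain' A ∧ l.head? = some x ∧ l.getLast? = some y

/-- A prune step between walks of the subgraph `(S, A)`. -/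
def PruneStepOn (S : Set V) (A : V → V → Prop) (l m : List V) : Prop :=
  IsWalkOn S A l ∧ IsWalkOn S A m ∧ (PruneOf l m ∨ PruneOf m l)

/-- A spider move between walks of the subgraph `(S, A)`. -/
def SpiderStepOn (S : Set V) (A : V → V → Prop) (l m : List V) : Prop :=
  IsWalkOn S A l ∧ IsWalkOn S A m ∧ l.length = m.length ∧
    ∃ i : ℕ, 0 < i ∧ i + 1 < l.length ∧ ∀ j : ℕ, j ≠ i → l[j]? = m[j]?

/-- `≡` (prunes and spider moves) within the subgraph `(S, A)`. -/
def HomEqvOn (S : Set V) (A : V → V → Prop) : List V → List V → Prop :=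
  Relation.EqvGen (fun l m => PruneStepOn S A l m ∨ SpiderStepOn S A l m)

/-- A functor from the fundamental groupoid of the subgraph `(S, A)` to a groupoid
`R`: an assignment on vertices together with an assignment of arrows to walks that
sends length-0 walks to identities, concatenations to composites, and is constant on
`≡`-classes. -/
structure PiMapOn {V : Type} (S : Set V) (A : V → V → Prop) (R : Type*) [Groupoid R] where
  obj : V → R
  map : ∀ (x y : V) (l : List V), IsWalkOnFrom S A x y l → (obj x ⟶ obj y)
  map_id : ∀ (x : V) (h : IsWalkOnFrom S A x x [x]), map x x [x] h = 𝟙 (obj x)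
  map_comp : ∀ (x y z : V) (l m : List V) (hl : IsWalkOnFrom S A x y l)
    (hm : IsWalkOnFrom S A y z m) (h : IsWalkOnFrom S A x z (wconcat l m)),
    map x z (wconcat l m) h = map x y l hl ≫ map y z m hm
  map_eqv : ∀ (x y : V) (l m : List V) (hl : IsWalkOnFrom S A x y l)
    (hm : IsWalkOnFrom S A x y m), HomEqvOn S A l m → map x y l hl = map x y m hm
attribute [simp] List.Chain'

theorem List.chain'_cons {α : Type*} {R : α → α → Prop} {a b : α} {l : List α} :
    List.Chain' R (a :: b :: l) ↔ R a b ∧ List.Chain' R (b :: l) := List.isChain_cons_cons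

theorem List.chain'_singleton {α : Type*} {R : α → α → Prop} (a : α) :
    List.Chain' R [a] := List.isChain_singleton a

theorem List.chain'_cons' {α : Type*} {R : α → α → Prop} {x : α} {l : List α} :
    List.Chain' R (x :: l) ↔ (∀ y ∈ l.head?, R x y) ∧ List.Chain' R l := List.isChain_cons

theorem List.chain'_append {α : Type*} {R : α → α → Prop} {l₁ l₂ : List α} :
    List.Chain' R (l₁ ++ l₂) ↔ List.Chain' R l₁ ∧ List.Chain' R l₂ ∧
      ∀ x ∈ l₁.getLast?, ∀ y ∈ l₂.head?, R x y := List.isChain_append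

namespace VK
open CategoryTheory

variable {V : Type} {R : Type*} [Groupoid R]

lemma isWalkOnFrom_single {S : Set V} {A : V → V → Prop} {x : V} (hx : x ∈ S) :
    IsWalkOnFrom S A x x [x] := by
  refine ⟨by simpa using hx, by simp, rfl, rfl⟩

lemma isWalkOnFrom_pair {S : Set V} {A : V → V → Prop} {u w : V} (hu : u ∈ S) (hw : w ∈ S)
    (h : A u w) : IsWalkOnFrom S A u w [u, w] := by
  refine ⟨by simp [hu, hw], by simp [h], rfl, rfl⟩

/-- All hypotheses of the van Kampen theorem bundled. -/
structure Setup {V : Type} (G : LoopGraph V) (S₁ S₂ : Set V) (A₁ A₂ : V → V → Prop)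
    (R : Type*) [Groupoid R] where
  F₁ : PiMapOn S₁ A₁ R
  F₂ : PiMapOn S₂ A₂ R
  hA₁S : ∀ u w : V, A₁ u w → u ∈ S₁ ∧ w ∈ S₁
  hA₂S : ∀ u w : V, A₂ u w → u ∈ S₂ ∧ w ∈ S₂
  hA₁symm : Symmetric A₁
  hA₂symm : Symmetric A₂
  hScover : S₁ ∪ S₂ = Set.univ
  hAcover : ∀ u w : V, G.Adj u w ↔ (A₁ u w ∨ A₂ u w)
  hdiamond : ∀ (u : V) (d : List V),
      IsWalkOnFrom Set.univ G.Adj u u d → d.length = 5 →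
      ((∀ x ∈ d, x ∈ S₁) ∧ d.Chain' A₁) ∨ ((∀ x ∈ d, x ∈ S₂) ∧ d.Chain' A₂)
  hobj : ∀ x ∈ S₁ ∩ S₂, F₁.obj x = F₂.obj x
  hmap : ∀ (x y : V) (l : List V),
      IsWalkOnFrom (S₁ ∩ S₂) (fun u w => A₁ u w ∧ A₂ u w) x y l →
      ∀ (h₁ : IsWalkOnFrom S₁ A₁ x y l) (h₂ : IsWalkOnFrom S₂ A₂ x y l)
        (ex : F₁.obj x = F₂.obj x) (ey : F₁.obj y = F₂.obj y),
        F₁.map x y l h₁ = eqToHom ex ≫ F₂.map x y l h₂ ≫ eqToHom ey.symm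

namespace Setup

variable {G : LoopGraph V} {S₁ S₂ : Set V} {A₁ A₂ : V → V → Prop}
variable (D : Setup G S₁ S₂ A₁ A₂ R)

open Classical in
/-- The vertex assignment of the glued functor. -/
noncomputable def obj (x : V) : R := if x ∈ S₁ then D.F₁.obj x else D.F₂.obj x

include D in
lemma mem₂_of_not_mem₁ {x : V} (hx : x ∉ S₁) : x ∈ S₂ := by
  have : x ∈ S₁ ∪ S₂ := by rw [D.hScover]; trivial
  exact this.resolve_left hx

lemma obj_eq₁ {x : V} (hx : x ∈ S₁) : D.obj x = D.F₁.obj x := by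
  simp [obj, hx]

lemma obj_eq₂ {x : V} (hx : x ∈ S₂) : D.obj x = D.F₂.obj x := by
  by_cases h : x ∈ S₁
  · rw [obj, if_pos h]; exact D.hobj x ⟨h, hx⟩
  · rw [obj, if_neg h]

open Classical in
/-- The edge assignment of the glued functor. -/
noncomputable def e (u w : V) (h : G.Adj u w) : D.obj u ⟶ D.obj w :=
  if h₁ : A₁ u w then
    eqToHom (D.obj_eq₁ (D.hA₁S u w h₁).1) ≫
      D.F₁.map u w [u, w] (isWalkOnFrom_pair (D.hA₁S u w h₁).1 (D.hA₁S u w h₁).2 h₁) ≫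
      eqToHom (D.obj_eq₁ (D.hA₁S u w h₁).2).symm
  else
    have h₂ : A₂ u w := ((D.hAcover u w).1 h).resolve_left h₁
    eqToHom (D.obj_eq₂ (D.hA₂S u w h₂).1) ≫
      D.F₂.map u w [u, w] (isWalkOnFrom_pair (D.hA₂S u w h₂).1 (D.hA₂S u w h₂).2 h₂) ≫
      eqToHom (D.obj_eq₂ (D.hA₂S u w h₂).2).symm

lemma e_eq₁ {u w : V} (h : G.Adj u w) (h₁ : A₁ u w) (p : IsWalkOnFrom S₁ A₁ u w [u, w])
    (eu : D.obj u = D.F₁.obj u) (ew : D.obj w = D.F₁.obj w) :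
    D.e u w h = eqToHom eu ≫ D.F₁.map u w [u, w] p ≫ eqToHom ew.symm := by
  rw [e, dif_pos h₁]

lemma e_eq₂ {u w : V} (h : G.Adj u w) (h₂ : A₂ u w) (p : IsWalkOnFrom S₂ A₂ u w [u, w])
    (eu : D.obj u = D.F₂.obj u) (ew : D.obj w = D.F₂.obj w) :
    D.e u w h = eqToHom eu ≫ D.F₂.map u w [u, w] p ≫ eqToHom ew.symm := by
  by_cases h₁ : A₁ u w
  · have hu : u ∈ S₁ ∩ S₂ := ⟨(D.hA₁S u w h₁).1, (D.hA₂S u w h₂).1⟩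
    have hw : w ∈ S₁ ∩ S₂ := ⟨(D.hA₁S u w h₁).2, (D.hA₂S u w h₂).2⟩
    have hint : IsWalkOnFrom (S₁ ∩ S₂) (fun u w => A₁ u w ∧ A₂ u w) u w [u, w] :=
      isWalkOnFrom_pair hu hw ⟨h₁, h₂⟩
    rw [e, dif_pos h₁, D.hmap u w [u, w] hint _ p (D.hobj u hu) (D.hobj w hw)]
    simp [eqToHom_trans]
  · rw [e, dif_neg h₁]

end Setup
end VK
namespace VK
open CategoryTheory
variable {V : Type} {R : Type*} [Groupoid R]

lemma _root_.PiMapOn.map_congr {S : Set V} {A : V → V → Prop} (F : PiMapOn S A R) {x y : V}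
    {l l' : List V} (h : l = l') (hl : IsWalkOnFrom S A x y l) (hl' : IsWalkOnFrom S A x y l') :
    F.map x y l hl = F.map x y l' hl' := by subst h; rfl

lemma _root_.PiMapOn.pair_inv {S : Set V} {A : V → V → Prop} (F : PiMapOn S A R) {u w : V}
    (hu : u ∈ S) (hw : w ∈ S) (huw : A u w) (hwu : A w u)
    (p : IsWalkOnFrom S A u w [u, w]) (p' : IsWalkOnFrom S A w u [w, u]) :
    F.map u w [u, w] p ≫ F.map w u [w, u] p' = 𝟙 (F.obj u) := by
  have h3 : IsWalkOnFrom S A u u [u, w, u] := ⟨by simp [hu, hw], by simp [huw, hwu], rfl, rfl⟩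
  have h1 : IsWalkOnFrom S A u u [u] := isWalkOnFrom_single hu
  calc F.map u w [u, w] p ≫ F.map w u [w, u] p'
      = F.map u u (wconcat [u, w] [w, u]) h3 := (F.map_comp u w u [u, w] [w, u] p p' h3).symm
    _ = F.map u u [u] h1 := by
        refine F.map_eqv u u _ [u] h3 h1 (Relation.EqvGen.rel _ _ (Or.inl ?_))
        exact ⟨⟨by simp, h3.1, h3.2.1⟩, ⟨by simp, h1.1, h1.2.1⟩,
          Or.inl ⟨[], [], u, w, rfl, rfl⟩⟩
    _ = 𝟙 (F.obj u) := F.map_id u h1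

lemma _root_.PiMapOn.diamond {S : Set V} {A : V → V → Prop} (F : PiMapOn S A R) {a b c b' : V}
    (ha : a ∈ S) (hb : b ∈ S) (hc : c ∈ S) (hb' : b' ∈ S)
    (hab : A a b) (hbc : A b c) (hab' : A a b') (hb'c : A b' c)
    (pab : IsWalkOnFrom S A a b [a, b]) (pbc : IsWalkOnFrom S A b c [b, c])
    (pab' : IsWalkOnFrom S A a b' [a, b']) (pb'c : IsWalkOnFrom S A b' c [b', c]) :
    F.map a b [a, b] pab ≫ F.map b c [b, c] pbc
      = F.map a b' [a, b'] pab' ≫ F.map b' c [b', c] pb'c := by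
  have t1 : IsWalkOnFrom S A a c [a, b, c] := ⟨by simp [ha, hb, hc], by simp [hab, hbc], rfl, rfl⟩
  have t2 : IsWalkOnFrom S A a c [a, b', c] :=
    ⟨by simp [ha, hb', hc], by simp [hab', hb'c], rfl, rfl⟩
  calc F.map a b [a, b] pab ≫ F.map b c [b, c] pbc
      = F.map a c (wconcat [a, b] [b, c]) t1 := (F.map_comp a b c [a, b] [b, c] pab pbc t1).symm
    _ = F.map a c [a, b', c] t2 := by
        refine F.map_eqv a c _ _ t1 t2 (Relation.EqvGen.rel _ _ (Or.inr ?_))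
        refine ⟨⟨by simp, t1.1, t1.2.1⟩, ⟨by simp, t2.1, t2.2.1⟩, by simp, 1, one_pos,
          by simp, fun j hj => ?_⟩
        match j with
        | 0 => rfl
        | 1 => exact absurd rfl hj
        | 2 => rfl
        | (n+3) => simp
    _ = F.map a b' [a, b'] pab' ≫ F.map b' c [b', c] pb'c :=
        F.map_comp a b' c [a, b'] [b', c] pab' pb'c t2

namespace Setup
variable {G : LoopGraph V} {S₁ S₂ : Set V} {A₁ A₂ : V → V → Prop}
variable (D : Setup G S₁ S₂ A₁ A₂ R)

lemma e_inv {u w : V} (h : G.Adj u w) (h' : G.Adj w u) :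
    D.e u w h ≫ D.e w u h' = 𝟙 (D.obj u) := by
  by_cases h₁ : A₁ u w
  · have hu := (D.hA₁S u w h₁).1
    have hw := (D.hA₁S u w h₁).2
    rw [D.e_eq₁ h h₁ (isWalkOnFrom_pair hu hw h₁) (D.obj_eq₁ hu) (D.obj_eq₁ hw),
      D.e_eq₁ h' (D.hA₁symm h₁) (isWalkOnFrom_pair hw hu (D.hA₁symm h₁)) (D.obj_eq₁ hw)
        (D.obj_eq₁ hu)]
    simp only [Category.assoc, eqToHom_trans, eqToHom_trans_assoc, eqToHom_refl, Category.id_comp]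
    slice_lhs 2 3 => rw [D.F₁.pair_inv hu hw h₁ (D.hA₁symm h₁) _ _]
    simp
  · have h₂ : A₂ u w := ((D.hAcover u w).1 h).resolve_left h₁
    have hu := (D.hA₂S u w h₂).1
    have hw := (D.hA₂S u w h₂).2
    rw [D.e_eq₂ h h₂ (isWalkOnFrom_pair hu hw h₂) (D.obj_eq₂ hu) (D.obj_eq₂ hw),
      D.e_eq₂ h' (D.hA₂symm h₂) (isWalkOnFrom_pair hw hu (D.hA₂symm h₂)) (D.obj_eq₂ hw)
        (D.obj_eq₂ hu)]
    simp only [Category.assoc, eqToHom_trans, eqToHom_trans_assoc, eqToHom_refl, Category.id_comp]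
    slice_lhs 2 3 => rw [D.F₂.pair_inv hu hw h₂ (D.hA₂symm h₂) _ _]
    simp

lemma e_diamond {a b c b' : V} (hab : G.Adj a b) (hbc : G.Adj b c) (hab' : G.Adj a b')
    (hb'c : G.Adj b' c) :
    D.e a b hab ≫ D.e b c hbc = D.e a b' hab' ≫ D.e b' c hb'c := by
  have hd : IsWalkOnFrom Set.univ G.Adj a a [a, b, c, b', a] :=
    ⟨by simp, by simp [hab, hbc, G.symm hb'c, G.symm hab'], rfl, rfl⟩
  rcases D.hdiamond a [a, b, c, b', a] hd rfl with ⟨hmem, hch⟩ | ⟨hmem, hch⟩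
  · have ha : a ∈ S₁ := hmem a (by simp)
    have hb : b ∈ S₁ := hmem b (by simp)
    have hc : c ∈ S₁ := hmem c (by simp)
    have hb'1 : b' ∈ S₁ := hmem b' (by simp)
    simp only [List.chain'_cons, List.chain'_singleton, and_true] at hch
    obtain ⟨e1, e2, e3, e4⟩ := hch
    rw [D.e_eq₁ hab e1 (isWalkOnFrom_pair ha hb e1) (D.obj_eq₁ ha) (D.obj_eq₁ hb),
      D.e_eq₁ hbc e2 (isWalkOnFrom_pair hb hc e2) (D.obj_eq₁ hb) (D.obj_eq₁ hc),
      D.e_eq₁ hab' (D.hA₁symm e4) (isWalkOnFrom_pair ha hb'1 (D.hA₁symm e4)) (D.obj_eq₁ ha)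
        (D.obj_eq₁ hb'1),
      D.e_eq₁ hb'c (D.hA₁symm e3) (isWalkOnFrom_pair hb'1 hc (D.hA₁symm e3)) (D.obj_eq₁ hb'1)
        (D.obj_eq₁ hc)]
    simp only [Category.assoc, eqToHom_trans, eqToHom_trans_assoc, eqToHom_refl, Category.id_comp]
    slice_lhs 2 3 => rw [D.F₁.diamond ha hb hc hb'1 e1 e2 (D.hA₁symm e4) (D.hA₁symm e3) (isWalkOnFrom_pair ha hb e1) (isWalkOnFrom_pair hb hc e2) (isWalkOnFrom_pair ha hb'1 (D.hA₁symm e4)) (isWalkOnFrom_pair hb'1 hc (D.hA₁symm e3))]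
    simp
  · have ha : a ∈ S₂ := hmem a (by simp)
    have hb : b ∈ S₂ := hmem b (by simp)
    have hc : c ∈ S₂ := hmem c (by simp)
    have hb'1 : b' ∈ S₂ := hmem b' (by simp)
    simp only [List.chain'_cons, List.chain'_singleton, and_true] at hch
    obtain ⟨e1, e2, e3, e4⟩ := hch
    rw [D.e_eq₂ hab e1 (isWalkOnFrom_pair ha hb e1) (D.obj_eq₂ ha) (D.obj_eq₂ hb),
      D.e_eq₂ hbc e2 (isWalkOnFrom_pair hb hc e2) (D.obj_eq₂ hb) (D.obj_eq₂ hc),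
      D.e_eq₂ hab' (D.hA₂symm e4) (isWalkOnFrom_pair ha hb'1 (D.hA₂symm e4)) (D.obj_eq₂ ha)
        (D.obj_eq₂ hb'1),
      D.e_eq₂ hb'c (D.hA₂symm e3) (isWalkOnFrom_pair hb'1 hc (D.hA₂symm e3)) (D.obj_eq₂ hb'1)
        (D.obj_eq₂ hc)]
    simp only [Category.assoc, eqToHom_trans, eqToHom_trans_assoc, eqToHom_refl, Category.id_comp]
    slice_lhs 2 3 => rw [D.F₂.diamond ha hb hc hb'1 e1 e2 (D.hA₂symm e4) (D.hA₂symm e3) (isWalkOnFrom_pair ha hb e1) (isWalkOnFrom_pair hb hc e2) (isWalkOnFrom_pair ha hb'1 (D.hA₂symm e4)) (isWalkOnFrom_pair hb'1 hc (D.hA₂symm e3))]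
    simp

/-- The map on walks, as a composite of edge maps. -/
noncomputable def mapAux :
    (l : List V) → l.Chain' G.Adj → (x y : V) → l.head? = some x → l.getLast? = some y →
      (D.obj x ⟶ D.obj y)
  | [], _, _, _, hx, _ => nomatch hx
  | [a], _, x, y, hx, hy => eqToHom (by
      obtain rfl : a = x := by simpa using hx
      obtain rfl : a = y := by simpa using hy
      rfl)
  | a :: b :: t, hc, x, y, hx, hy =>
    eqToHom (congrArg D.obj (Option.some.inj hx).symm) ≫
      D.e a b (List.chain'_cons.mp hc).1 ≫
      mapAux (b :: t) (List.chain'_cons.mp hc).2 b y rfl (by simpa using hy)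

lemma mapAux_single (a x y : V) (hc : List.Chain' G.Adj [a]) (hx : List.head? [a] = some x)
    (hy : List.getLast? [a] = some y) (h : x = y) :
    D.mapAux [a] hc x y hx hy = eqToHom (congrArg D.obj h) := by
  rw [mapAux]

lemma mapAux_cons (a b : V) (t : List V) (hc : List.Chain' G.Adj (a :: b :: t))
    (hc' : List.Chain' G.Adj (b :: t)) (hab : G.Adj a b) (x y : V)
    (hx : (a :: b :: t).head? = some x) (hy : (a :: b :: t).getLast? = some y)
    (hy' : (b :: t).getLast? = some y) (h : x = a) :
    D.mapAux (a :: b :: t) hc x y hx hy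
      = eqToHom (congrArg D.obj h) ≫ D.e a b hab ≫ D.mapAux (b :: t) hc' b y rfl hy' := by
  rw [mapAux]

lemma mapAux_congr {l l' : List V} (h : l = l') (hc : l.Chain' G.Adj) (hc' : l'.Chain' G.Adj)
    (x y : V) (hx : l.head? = some x) (hy : l.getLast? = some y) (hx' : l'.head? = some x)
    (hy' : l'.getLast? = some y) :
    D.mapAux l hc x y hx hy = D.mapAux l' hc' x y hx' hy' := by subst h; rfl

end Setup
end VK
namespace VK
open CategoryTheory
variable {V : Type} {R : Type*} [Groupoid R]

lemma getLast?_cons_ne {α : Type} (c : α) {r : List α} (h : r ≠ []) :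
    (c :: r).getLast? = r.getLast? := by
  cases r with
  | nil => exact absurd rfl h
  | cons b t => exact List.getLast?_cons_cons

namespace Setup
variable {G : LoopGraph V} {S₁ S₂ : Set V} {A₁ A₂ : V → V → Prop}
variable (D : Setup G S₁ S₂ A₁ A₂ R)

lemma mapAux_cons' (c : V) (r : List V) (w : V) (hw : r.head? = some w)
    (hc : (c :: r).Chain' G.Adj) (hcr : r.Chain' G.Adj) (hadj : G.Adj c w) (x y : V)
    (hx : (c :: r).head? = some x) (hy : (c :: r).getLast? = some y)
    (hy' : r.getLast? = some y) (hxc : x = c) :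
    D.mapAux (c :: r) hc x y hx hy
      = eqToHom (congrArg D.obj hxc) ≫ D.e c w hadj ≫ D.mapAux r hcr w y hw hy' := by
  match r, hw with
  | b :: t, hw =>
    obtain rfl : b = w := by simpa using hw
    exact D.mapAux_cons c b t hc hcr hadj x y hx hy hy' hxc

lemma mapAux_comp' : ∀ (l m n : List V), n = l ++ m.tail → ∀ (x y z : V)
    (hcl : l.Chain' G.Adj) (hcm : m.Chain' G.Adj) (hc : n.Chain' G.Adj)
    (hxl : l.head? = some x) (hyl : l.getLast? = some y)
    (hym : m.head? = some y) (hzm : m.getLast? = some z)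
    (hx : n.head? = some x) (hz : n.getLast? = some z),
    D.mapAux n hc x z hx hz
      = D.mapAux l hcl x y hxl hyl ≫ D.mapAux m hcm y z hym hzm
  | [], m, n, hn, x, y, z, hcl, hcm, hc, hxl, hyl, hym, hzm, hx, hz => nomatch hxl
  | [a], m, n, hn, x, y, z, hcl, hcm, hc, hxl, hyl, hym, hzm, hx, hz => by
    subst hn
    obtain rfl : a = x := by simpa using hxl
    have hay : a = y := by simpa using hyl
    rw [D.mapAux_single a a y hcl hxl hyl hay]
    subst hay
    simp only [eqToHom_refl, Category.id_comp]
    match m, hym, hzm, hc, hz with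
    | c :: ms, hym, hzm, hc, hz =>
      have hac : a = c := by simpa using hym.symm
      exact D.mapAux_congr (show ([a] ++ (c :: ms).tail : List V) = c :: ms by
        rw [hac]; rfl) hc hcm a z hx hz hym hzm
  | a :: b :: t, m, n, hn, x, y, z, hcl, hcm, hc, hxl, hyl, hym, hzm, hx, hz => by
    subst hn
    obtain rfl : a = x := by simpa using hxl
    have hadj : G.Adj a b := (List.chain'_cons.mp hcl).1
    have hcl' : (b :: t).Chain' G.Adj := (List.chain'_cons.mp hcl).2
    have hc2 : (b :: (t ++ m.tail)).Chain' G.Adj := (List.chain'_cons.mp hc).2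
    have hyl' : (b :: t).getLast? = some y := by simpa [List.getLast?_cons_cons] using hyl
    have hz2 : (b :: (t ++ m.tail)).getLast? = some z := by
      simpa [List.getLast?_cons_cons] using hz
    show D.mapAux (a :: b :: (t ++ m.tail)) hc a z hx hz = _
    rw [D.mapAux_cons a b (t ++ m.tail) hc hc2 hadj a z hx hz hz2 rfl,
      D.mapAux_cons a b t hcl hcl' hadj a y hxl hyl hyl' rfl,
      mapAux_comp' (b :: t) m (b :: (t ++ m.tail)) (by simp) b y z hcl' hcm hc2 rfl hyl' hym
        hzm rfl hz2]
    simp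

lemma mapAux_prune : ∀ (p : List V), ∀ (s : List V) (a b : V) (l m : List V),
    l = p ++ a :: b :: a :: s → m = p ++ a :: s → ∀ (hcl : l.Chain' G.Adj)
    (hcm : m.Chain' G.Adj) (x y : V) (hx : l.head? = some x) (hy : l.getLast? = some y)
    (hx' : m.head? = some x) (hy' : m.getLast? = some y),
    D.mapAux l hcl x y hx hy = D.mapAux m hcm x y hx' hy'
  | [], s, a, b, l, m, hl, hm, hcl, hcm, x, y, hx, hy, hx', hy' => by
    subst hl; subst hm
    simp only [List.nil_append] at hcl hcm hx hy hx' hy' ⊢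
    obtain rfl : a = x := by simpa using hx
    have c1 : G.Adj a b := (List.chain'_cons.mp hcl).1
    have hcl1 : (b :: a :: s).Chain' G.Adj := (List.chain'_cons.mp hcl).2
    have c2 : G.Adj b a := (List.chain'_cons.mp hcl1).1
    have hcl2 : (a :: s).Chain' G.Adj := (List.chain'_cons.mp hcl1).2
    have hy1 : (b :: a :: s).getLast? = some y := by
      simpa [List.getLast?_cons_cons] using hy
    have hy2 : (a :: s).getLast? = some y := by
      simpa [List.getLast?_cons_cons] using hy
    rw [D.mapAux_cons a b (a :: s) hcl hcl1 c1 a y hx hy hy1 rfl,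
      D.mapAux_cons b a s hcl1 hcl2 c2 b y rfl hy1 hy2 rfl]
    simp only [eqToHom_refl, Category.id_comp]
    slice_lhs 1 2 => rw [D.e_inv c1 c2]
    simp only [Category.id_comp]
  | c :: p', s, a, b, l, m, hl, hm, hcl, hcm, x, y, hx, hy, hx', hy' => by
    subst hl; subst hm
    simp only [List.cons_append] at hcl hcm hx hy hx' hy' ⊢
    obtain rfl : c = x := by simpa using hx
    obtain ⟨w, hw1, hw2⟩ : ∃ w, (p' ++ a :: b :: a :: s).head? = some w ∧
        (p' ++ a :: s).head? = some w := by
      cases p' <;> exact ⟨_, rfl, rfl⟩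
    have had : G.Adj c w := (List.chain'_cons'.mp hcl).1 w hw1
    have hcl2 : (p' ++ a :: b :: a :: s).Chain' G.Adj := (List.chain'_cons'.mp hcl).2
    have hcm2 : (p' ++ a :: s).Chain' G.Adj := (List.chain'_cons'.mp hcm).2
    have hy2 : (p' ++ a :: b :: a :: s).getLast? = some y := by
      rwa [getLast?_cons_ne _ (by simp)] at hy
    have hy2' : (p' ++ a :: s).getLast? = some y := by
      rwa [getLast?_cons_ne _ (by simp)] at hy'
    rw [D.mapAux_cons' c _ w hw1 hcl hcl2 had c y hx hy hy2 rfl,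
      D.mapAux_cons' c _ w hw2 hcm hcm2 had c y hx' hy' hy2' rfl,
      mapAux_prune p' s a b _ _ rfl rfl hcl2 hcm2 w y hw1 hy2 hw2 hy2']

end Setup
end VK
namespace VK
open CategoryTheory
namespace Setup
variable {V : Type} {R : Type*} [Groupoid R]
variable {G : LoopGraph V} {S₁ S₂ : Set V} {A₁ A₂ : V → V → Prop}
variable (D : Setup G S₁ S₂ A₁ A₂ R)

lemma mapAux_split (P : List V) (a b c : V) (S' : List V) (ha : P.getLast? = some a)
    (hcP : P.Chain' G.Adj) (h1 : G.Adj a b) (h2 : G.Adj b c) (hcS : (c :: S').Chain' G.Adj)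
    (hc : (P ++ b :: c :: S').Chain' G.Adj) (x y : V)
    (hx : (P ++ b :: c :: S').head? = some x) (hxP : P.head? = some x)
    (hy : (P ++ b :: c :: S').getLast? = some y) (hy' : (c :: S').getLast? = some y) :
    D.mapAux (P ++ b :: c :: S') hc x y hx hy
      = D.mapAux P hcP x a hxP ha ≫ D.e a b h1 ≫ D.e b c h2 ≫
          D.mapAux (c :: S') hcS c y rfl hy' := by
  have hcm : (a :: b :: c :: S').Chain' G.Adj := by
    rw [List.chain'_cons, List.chain'_cons]; exact ⟨h1, h2, hcS⟩
  have hc1 : (b :: c :: S').Chain' G.Adj := (List.chain'_cons.mp hcm).2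
  have hy1 : (b :: c :: S').getLast? = some y := by
    simpa [List.getLast?_cons_cons] using hy'
  have hym : (a :: b :: c :: S').getLast? = some y := by
    simpa [List.getLast?_cons_cons] using hy'
  rw [D.mapAux_comp' P (a :: b :: c :: S') (P ++ b :: c :: S') rfl x a y hcP hcm hc hxP ha
      rfl hym hx hy,
    D.mapAux_cons a b (c :: S') hcm hc1 h1 a y rfl hym hy1 rfl,
    D.mapAux_cons b c S' hc1 hcS h2 b y rfl hy1 hy' rfl]
  simp

lemma mapAux_spider (l m : List V) (hcl : l.Chain' G.Adj) (hcm : m.Chain' G.Adj)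
    (hlen : l.length = m.length) (i : ℕ) (hi0 : 0 < i) (hi1 : i + 1 < l.length)
    (hagree : ∀ j : ℕ, j ≠ i → l[j]? = m[j]?) (x y : V)
    (hx : l.head? = some x) (hy : l.getLast? = some y)
    (hx' : m.head? = some x) (hy' : m.getLast? = some y) :
    D.mapAux l hcl x y hx hy = D.mapAux m hcm x y hx' hy' := by
  have hil : i < l.length := by omega
  have him : i < m.length := by omega
  have him1 : i + 1 < m.length := by omega
  -- the common prefix and suffix
  have hPm : m.take i = l.take i := by
    apply List.ext_getElem?
    intro j
    rw [List.getElem?_take, List.getElem?_take]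
    split
    · exact (hagree j (by omega)).symm
    · rfl
  have hSm : m.drop (i + 1) = l.drop (i + 1) := by
    apply List.ext_getElem?
    intro j
    rw [List.getElem?_drop, List.getElem?_drop]
    exact (hagree (i + 1 + j) (by omega)).symm
  have hl2 : l = l.take i ++ l[i] :: l.drop (i + 1) := by
    conv_lhs => rw [← List.take_append_drop i l]
    rw [List.drop_eq_getElem_cons hil]
  have hm2 : m = l.take i ++ m[i] :: l.drop (i + 1) := by
    conv_lhs => rw [← List.take_append_drop i m]
    rw [List.drop_eq_getElem_cons him, hPm, hSm]
  have hPne : l.take i ≠ [] := by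
    have : (l.take i).length = i := by rw [List.length_take]; omega
    intro h; rw [h] at this; simp at this; omega
  obtain ⟨a, ha⟩ : ∃ a, (l.take i).getLast? = some a :=
    ⟨(l.take i).getLast hPne, List.getLast?_eq_getLast hPne⟩
  have hSne : l.drop (i + 1) ≠ [] := by
    have : (l.drop (i + 1)).length = l.length - (i + 1) := List.length_drop
    intro h; rw [h] at this; simp at this; omega
  obtain ⟨c, S', hS⟩ : ∃ c S', l.drop (i + 1) = c :: S' := by
    cases hd : l.drop (i + 1) with
    | nil => exact absurd hd hSne
    | cons c S' => exact ⟨c, S', rfl⟩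
  rw [hS] at hl2 hm2
  -- chains of the rewritten lists
  have hcl2 : (l.take i ++ l[i] :: c :: S').Chain' G.Adj := hl2 ▸ hcl
  have hcm2 : (l.take i ++ m[i] :: c :: S').Chain' G.Adj := hm2 ▸ hcm
  obtain ⟨hcP, hcl3, hconn⟩ := List.chain'_append.mp hcl2
  obtain ⟨-, hcm3, hconn'⟩ := List.chain'_append.mp hcm2
  have hab : G.Adj a l[i] := hconn a ha l[i] rfl
  have hab' : G.Adj a m[i] := hconn' a ha m[i] rfl
  have hbc : G.Adj l[i] c := (List.chain'_cons.mp hcl3).1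
  have hb'c : G.Adj m[i] c := (List.chain'_cons.mp hcm3).1
  have hcS : (c :: S').Chain' G.Adj := (List.chain'_cons.mp hcl3).2
  -- endpoints of the rewritten lists
  have hx2 : (l.take i ++ l[i] :: c :: S').head? = some x := hl2 ▸ hx
  have hy2 : (l.take i ++ l[i] :: c :: S').getLast? = some y := hl2 ▸ hy
  have hx2' : (l.take i ++ m[i] :: c :: S').head? = some x := hm2 ▸ hx'
  have hy2' : (l.take i ++ m[i] :: c :: S').getLast? = some y := hm2 ▸ hy'
  have hxP : (l.take i).head? = some x := by
    rwa [List.head?_append_of_ne_nil _ hPne] at hx2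
  have hyS : (c :: S').getLast? = some y := by
    rwa [List.getLast?_append_cons, List.getLast?_cons_cons] at hy2
  rw [D.mapAux_congr hl2 hcl hcl2 x y hx hy hx2 hy2,
    D.mapAux_congr hm2 hcm hcm2 x y hx' hy' hx2' hy2',
    D.mapAux_split (l.take i) a l[i] c S' ha hcP hab hbc hcS hcl2 x y hx2 hxP hy2 hyS,
    D.mapAux_split (l.take i) a m[i] c S' ha hcP hab' hb'c hcS hcm2 x y hx2' hxP hy2' hyS]
  slice_lhs 2 3 => rw [D.e_diamond hab hbc hab' hb'c]
  simp

end Setup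
end VK
namespace VK
open CategoryTheory
variable {V : Type} {R : Type*} [Groupoid R]

lemma prune_head {p s : List V} {a b : V} :
    (p ++ a :: b :: a :: s).head? = (p ++ a :: s).head? := by cases p <;> simp

lemma prune_last {p s : List V} {a b : V} :
    (p ++ a :: b :: a :: s).getLast? = (p ++ a :: s).getLast? := by
  rw [List.getLast?_append_cons, List.getLast?_append_cons, List.getLast?_cons_cons,
    List.getLast?_cons_cons]

lemma head?_eq_getElem?_zero {α : Type} (l : List α) : l.head? = l[0]? := by
  cases l <;> simp

namespace Setup
variable {G : LoopGraph V} {S₁ S₂ : Set V} {A₁ A₂ : V → V → Prop}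
variable (D : Setup G S₁ S₂ A₁ A₂ R)

lemma walkFrom_transfer {l m : List V} (hwm : IsWalkOn Set.univ G.Adj m)
    (hh : l.head? = m.head?) (hg : l.getLast? = m.getLast?) {x y : V}
    (hl : IsWalkOnFrom Set.univ G.Adj x y l) : IsWalkOnFrom Set.univ G.Adj x y m :=
  ⟨fun _ _ => trivial, hwm.2.2, hh ▸ hl.2.2.1, hg ▸ hl.2.2.2⟩

lemma mapAux_eqv (l m : List V) (h : HomEqvOn Set.univ G.Adj l m) :
    (∀ x y : V, IsWalkOnFrom Set.univ G.Adj x y l ↔ IsWalkOnFrom Set.univ G.Adj x y m) ∧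
    ∀ (x y : V) (hl : IsWalkOnFrom Set.univ G.Adj x y l)
      (hm : IsWalkOnFrom Set.univ G.Adj x y m),
      D.mapAux l hl.2.1 x y hl.2.2.1 hl.2.2.2 = D.mapAux m hm.2.1 x y hm.2.2.1 hm.2.2.2 := by
  induction h with
  | rel l m h =>
    have hends : l.head? = m.head? ∧ l.getLast? = m.getLast? := by
      rcases h with ⟨hwl, hwm, hpr⟩ | ⟨hwl, hwm, hlen, i, hi0, hi1, hagree⟩
      · rcases hpr with ⟨p, s, a, b, rfl, rfl⟩ | ⟨p, s, a, b, rfl, rfl⟩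
        · exact ⟨prune_head, prune_last⟩
        · exact ⟨prune_head.symm, prune_last.symm⟩
      · constructor
        · rw [head?_eq_getElem?_zero, head?_eq_getElem?_zero]
          exact hagree 0 (by omega)
        · rw [List.getLast?_eq_getElem?, List.getLast?_eq_getElem?, hlen]
          exact hagree (m.length - 1) (by omega)
    have hwl : IsWalkOn Set.univ G.Adj l := by
      rcases h with ⟨hwl, _, _⟩ | ⟨hwl, _, _⟩ <;> exact hwl
    have hwm : IsWalkOn Set.univ G.Adj m := by
      rcases h with ⟨_, hwm, _⟩ | ⟨_, hwm, _⟩ <;> exact hwm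
    refine ⟨fun x y => ⟨walkFrom_transfer (G := G) hwm hends.1 hends.2,
      walkFrom_transfer (G := G) hwl hends.1.symm hends.2.symm⟩, fun x y hl hm => ?_⟩
    rcases h with ⟨_, _, hpr⟩ | ⟨_, _, hlen, i, hi0, hi1, hagree⟩
    · rcases hpr with ⟨p, s, a, b, rfl, rfl⟩ | ⟨p, s, a, b, rfl, rfl⟩
      · exact D.mapAux_prune p s a b _ _ rfl rfl hl.2.1 hm.2.1 x y hl.2.2.1 hl.2.2.2
          hm.2.2.1 hm.2.2.2
      · exact (D.mapAux_prune p s a b _ _ rfl rfl hm.2.1 hl.2.1 x y hm.2.2.1 hm.2.2.2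
          hl.2.2.1 hl.2.2.2).symm
    · exact D.mapAux_spider l m hl.2.1 hm.2.1 hlen i hi0 hi1 hagree x y hl.2.2.1 hl.2.2.2
        hm.2.2.1 hm.2.2.2
  | refl l => exact ⟨fun x y => Iff.rfl, fun x y hl hm => rfl⟩
  | symm l m _ ih => exact ⟨fun x y => (ih.1 x y).symm, fun x y hl hm => (ih.2 x y hm hl).symm⟩
  | trans l m n _ _ ih1 ih2 =>
    refine ⟨fun x y => (ih1.1 x y).trans (ih2.1 x y), fun x y hl hn => ?_⟩
    have hm := (ih1.1 x y).mp hl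
    exact (ih1.2 x y hl hm).trans (ih2.2 x y hm hn)

/-- The glued functor. -/
noncomputable def toPiMapOn : PiMapOn Set.univ G.Adj R where
  obj := D.obj
  map := fun x y l h => D.mapAux l h.2.1 x y h.2.2.1 h.2.2.2
  map_id := fun x h => by
    show D.mapAux [x] h.2.1 x x h.2.2.1 h.2.2.2 = 𝟙 (D.obj x)
    rw [D.mapAux_single x x x h.2.1 h.2.2.1 h.2.2.2 rfl]; simp
  map_comp := fun x y z l m hl hm h =>
    D.mapAux_comp' l m (wconcat l m) rfl x y z hl.2.1 hm.2.1 h.2.1 hl.2.2.1 hl.2.2.2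
      hm.2.2.1 hm.2.2.2 h.2.2.1 h.2.2.2
  map_eqv := fun x y l m hl hm h => (D.mapAux_eqv l m h).2 x y hl hm

lemma mapAux_restrict₁ : ∀ (l : List V) (x y : V), IsWalkOnFrom S₁ A₁ x y l →
    ∀ (hc : l.Chain' G.Adj) (hx : l.head? = some x) (hy : l.getLast? = some y)
    (h₁ : IsWalkOnFrom S₁ A₁ x y l)
    (ex : D.obj x = D.F₁.obj x) (ey : D.obj y = D.F₁.obj y),
    D.mapAux l hc x y hx hy = eqToHom ex ≫ D.F₁.map x y l h₁ ≫ eqToHom ey.symm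
  | [], x, y, h0, hc, hx, hy, h₁, ex, ey => nomatch hx
  | [a], x, y, h0, hc, hx, hy, h₁, ex, ey => by
    obtain rfl : a = x := by simpa using hx
    have hay : a = y := by simpa using hy
    subst hay
    rw [D.mapAux_single a a a hc hx hy rfl, D.F₁.map_id a h₁]
    simp
  | a :: b :: t, x, y, h0, hc, hx, hy, h₁, ex, ey => by
    obtain rfl : a = x := by simpa using hx
    have e1 : A₁ a b := (List.chain'_cons.mp h₁.2.1).1
    have haS : a ∈ S₁ := h₁.1 a (by simp)
    have hbS : b ∈ S₁ := h₁.1 b (by simp)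
    have h₁' : IsWalkOnFrom S₁ A₁ b y (b :: t) :=
      ⟨fun u hu => h₁.1 u (by simp [hu]), (List.chain'_cons.mp h₁.2.1).2, rfl,
        by simpa [List.getLast?_cons_cons] using h₁.2.2.2⟩
    have hadj : G.Adj a b := (List.chain'_cons.mp hc).1
    have hc' : (b :: t).Chain' G.Adj := (List.chain'_cons.mp hc).2
    have hy' : (b :: t).getLast? = some y := by simpa [List.getLast?_cons_cons] using hy
    rw [D.mapAux_cons a b t hc hc' hadj a y hx hy hy' rfl,
      mapAux_restrict₁ (b :: t) b y h₁' hc' rfl hy' h₁' (D.obj_eq₁ hbS) ey,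
      D.e_eq₁ hadj e1 (isWalkOnFrom_pair haS hbS e1) (D.obj_eq₁ haS) (D.obj_eq₁ hbS)]
    have hcomp : D.F₁.map a y (a :: b :: t) h₁
        = D.F₁.map a b [a, b] (isWalkOnFrom_pair haS hbS e1) ≫ D.F₁.map b y (b :: t) h₁' :=
      D.F₁.map_comp a b y [a, b] (b :: t) (isWalkOnFrom_pair haS hbS e1) h₁' h₁
    rw [hcomp]
    have hexa : ex = D.obj_eq₁ haS := rfl
    simp [eqToHom_trans_assoc]

lemma mapAux_restrict₂ : ∀ (l : List V) (x y : V), IsWalkOnFrom S₂ A₂ x y l →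
    ∀ (hc : l.Chain' G.Adj) (hx : l.head? = some x) (hy : l.getLast? = some y)
    (h₂ : IsWalkOnFrom S₂ A₂ x y l)
    (ex : D.obj x = D.F₂.obj x) (ey : D.obj y = D.F₂.obj y),
    D.mapAux l hc x y hx hy = eqToHom ex ≫ D.F₂.map x y l h₂ ≫ eqToHom ey.symm
  | [], x, y, h0, hc, hx, hy, h₂, ex, ey => nomatch hx
  | [a], x, y, h0, hc, hx, hy, h₂, ex, ey => by
    obtain rfl : a = x := by simpa using hx
    have hay : a = y := by simpa using hy
    subst hay
    rw [D.mapAux_single a a a hc hx hy rfl, D.F₂.map_id a h₂]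
    simp
  | a :: b :: t, x, y, h0, hc, hx, hy, h₂, ex, ey => by
    obtain rfl : a = x := by simpa using hx
    have e1 : A₂ a b := (List.chain'_cons.mp h₂.2.1).1
    have haS : a ∈ S₂ := h₂.1 a (by simp)
    have hbS : b ∈ S₂ := h₂.1 b (by simp)
    have h₂' : IsWalkOnFrom S₂ A₂ b y (b :: t) :=
      ⟨fun u hu => h₂.1 u (by simp [hu]), (List.chain'_cons.mp h₂.2.1).2, rfl,
        by simpa [List.getLast?_cons_cons] using h₂.2.2.2⟩
    have hadj : G.Adj a b := (List.chain'_cons.mp hc).1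
    have hc' : (b :: t).Chain' G.Adj := (List.chain'_cons.mp hc).2
    have hy' : (b :: t).getLast? = some y := by simpa [List.getLast?_cons_cons] using hy
    rw [D.mapAux_cons a b t hc hc' hadj a y hx hy hy' rfl,
      mapAux_restrict₂ (b :: t) b y h₂' hc' rfl hy' h₂' (D.obj_eq₂ hbS) ey,
      D.e_eq₂ hadj e1 (isWalkOnFrom_pair haS hbS e1) (D.obj_eq₂ haS) (D.obj_eq₂ hbS)]
    have hcomp : D.F₂.map a y (a :: b :: t) h₂
        = D.F₂.map a b [a, b] (isWalkOnFrom_pair haS hbS e1) ≫ D.F₂.map b y (b :: t) h₂' :=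
      D.F₂.map_comp a b y [a, b] (b :: t) (isWalkOnFrom_pair haS hbS e1) h₂' h₂
    rw [hcomp]
    simp [eqToHom_trans_assoc]

end Setup
end VK
namespace VK
open CategoryTheory
variable {V : Type} {R : Type*} [Groupoid R]

lemma _root_.PiMapOn.ext' {S : Set V} {A : V → V → Prop} {F F' : PiMapOn S A R}
    (hobj : F.obj = F'.obj)
    (hmap : ∀ (x y : V) (l : List V) (h : IsWalkOnFrom S A x y l),
      F.map x y l h = eqToHom (congrFun hobj x) ≫ F'.map x y l h ≫
        eqToHom (congrFun hobj y).symm) : F = F' := by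
  obtain ⟨obj, map, hi, hcmp, he⟩ := F
  obtain ⟨obj', map', hi', hcmp', he'⟩ := F'
  obtain rfl : obj = obj' := hobj
  have hm : map = map' := by
    funext x y l h
    simpa using hmap x y l h
  subst hm
  rfl

namespace Setup
variable {G : LoopGraph V} {S₁ S₂ : Set V} {A₁ A₂ : V → V → Prop}
variable (D : Setup G S₁ S₂ A₁ A₂ R)

lemma uniq_edge (F' : PiMapOn Set.univ G.Adj R) (hobj' : F'.obj = D.obj)
    (q3 : ∀ (x y : V) (l : List V) (h₁ : IsWalkOnFrom S₁ A₁ x y l)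
      (h : IsWalkOnFrom Set.univ G.Adj x y l)
      (ex : F'.obj x = D.F₁.obj x) (ey : F'.obj y = D.F₁.obj y),
      F'.map x y l h = eqToHom ex ≫ D.F₁.map x y l h₁ ≫ eqToHom ey.symm)
    (q4 : ∀ (x y : V) (l : List V) (h₂ : IsWalkOnFrom S₂ A₂ x y l)
      (h : IsWalkOnFrom Set.univ G.Adj x y l)
      (ex : F'.obj x = D.F₂.obj x) (ey : F'.obj y = D.F₂.obj y),
      F'.map x y l h = eqToHom ex ≫ D.F₂.map x y l h₂ ≫ eqToHom ey.symm)
    (a b : V) (hadj : G.Adj a b) (p : IsWalkOnFrom Set.univ G.Adj a b [a, b]) :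
    F'.map a b [a, b] p
      = eqToHom (congrFun hobj' a) ≫ D.e a b hadj ≫ eqToHom (congrFun hobj' b).symm := by
  by_cases h₁ : A₁ a b
  · have haS := (D.hA₁S a b h₁).1
    have hbS := (D.hA₁S a b h₁).2
    rw [q3 a b [a, b] (isWalkOnFrom_pair haS hbS h₁) p
        ((congrFun hobj' a).trans (D.obj_eq₁ haS)) ((congrFun hobj' b).trans (D.obj_eq₁ hbS)),
      D.e_eq₁ hadj h₁ (isWalkOnFrom_pair haS hbS h₁) (D.obj_eq₁ haS) (D.obj_eq₁ hbS)]
    simp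
  · have h₂ : A₂ a b := ((D.hAcover a b).1 hadj).resolve_left h₁
    have haS := (D.hA₂S a b h₂).1
    have hbS := (D.hA₂S a b h₂).2
    rw [q4 a b [a, b] (isWalkOnFrom_pair haS hbS h₂) p
        ((congrFun hobj' a).trans (D.obj_eq₂ haS)) ((congrFun hobj' b).trans (D.obj_eq₂ hbS)),
      D.e_eq₂ hadj h₂ (isWalkOnFrom_pair haS hbS h₂) (D.obj_eq₂ haS) (D.obj_eq₂ hbS)]
    simp

lemma uniq_map (F' : PiMapOn Set.univ G.Adj R) (hobj' : F'.obj = D.obj)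
    (q3 : ∀ (x y : V) (l : List V) (h₁ : IsWalkOnFrom S₁ A₁ x y l)
      (h : IsWalkOnFrom Set.univ G.Adj x y l)
      (ex : F'.obj x = D.F₁.obj x) (ey : F'.obj y = D.F₁.obj y),
      F'.map x y l h = eqToHom ex ≫ D.F₁.map x y l h₁ ≫ eqToHom ey.symm)
    (q4 : ∀ (x y : V) (l : List V) (h₂ : IsWalkOnFrom S₂ A₂ x y l)
      (h : IsWalkOnFrom Set.univ G.Adj x y l)
      (ex : F'.obj x = D.F₂.obj x) (ey : F'.obj y = D.F₂.obj y),
      F'.map x y l h = eqToHom ex ≫ D.F₂.map x y l h₂ ≫ eqToHom ey.symm) :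
    ∀ (l : List V) (x y : V) (h : IsWalkOnFrom Set.univ G.Adj x y l)
      (hc : l.Chain' G.Adj) (hx : l.head? = some x) (hy : l.getLast? = some y),
      F'.map x y l h
        = eqToHom (congrFun hobj' x) ≫ D.mapAux l hc x y hx hy ≫
            eqToHom (congrFun hobj' y).symm
  | [], x, y, h, hc, hx, hy => nomatch hx
  | [a], x, y, h, hc, hx, hy => by
    obtain rfl : a = x := by simpa using hx
    have hay : a = y := by simpa using hy
    subst hay
    rw [F'.map_id a h, D.mapAux_single a a a hc hx hy rfl]
    simp
  | a :: b :: t, x, y, h, hc, hx, hy => by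
    obtain rfl : a = x := by simpa using hx
    have hadj : G.Adj a b := (List.chain'_cons.mp hc).1
    have hc' : (b :: t).Chain' G.Adj := (List.chain'_cons.mp hc).2
    have hy' : (b :: t).getLast? = some y := by simpa [List.getLast?_cons_cons] using hy
    have hpw : IsWalkOnFrom Set.univ G.Adj a b [a, b] :=
      ⟨fun _ _ => trivial, by simp [hadj], rfl, rfl⟩
    have htw : IsWalkOnFrom Set.univ G.Adj b y (b :: t) :=
      ⟨fun _ _ => trivial, hc', rfl, hy'⟩
    have hcomp : F'.map a y (a :: b :: t) h
        = F'.map a b [a, b] hpw ≫ F'.map b y (b :: t) htw :=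
      F'.map_comp a b y [a, b] (b :: t) hpw htw h
    rw [hcomp, D.uniq_edge F' hobj' q3 q4 a b hadj hpw,
      uniq_map F' hobj' q3 q4 (b :: t) b y htw hc' rfl hy',
      D.mapAux_cons a b t hc hc' hadj a y hx hy hy' rfl]
    simp

end Setup
end VK

/-- van Kampen: if `G = G₁ ∪ G₂` (subgraphs `Gᵢ = (Sᵢ, Aᵢ)` whose
vertex and edge sets cover those of `G`) and every diamond (closed walk of length 4)
of `G` lies entirely in `G₁` or in `G₂`, then `Π(G)` is the pushout
`Π(G₁) *_{Π(G₁ ∩ G₂)} Π(G₂)`: for any groupoid `R` and functors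
`F₁ : Π(G₁) → R`, `F₂ : Π(G₂) → R` agreeing on `Π(G₁ ∩ G₂)`, there is a unique
functor `F : Π(G) → R` restricting to `F₁` and `F₂`. -/
theorem stmt17 {V : Type} (G : LoopGraph V) (S₁ S₂ : Set V) (A₁ A₂ : V → V → Prop)
    (hA₁S : ∀ u w : V, A₁ u w → u ∈ S₁ ∧ w ∈ S₁)
    (hA₂S : ∀ u w : V, A₂ u w → u ∈ S₂ ∧ w ∈ S₂)
    (hA₁symm : Symmetric A₁) (hA₂symm : Symmetric A₂)
    (hScover : S₁ ∪ S₂ = Set.univ)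
    (hAcover : ∀ u w : V, G.Adj u w ↔ (A₁ u w ∨ A₂ u w))
    (hdiamond : ∀ (u : V) (d : List V),
      IsWalkOnFrom Set.univ G.Adj u u d → d.length = 5 →
      ((∀ x ∈ d, x ∈ S₁) ∧ d.Chain' A₁) ∨ ((∀ x ∈ d, x ∈ S₂) ∧ d.Chain' A₂))
    (R : Type*) [Groupoid R]
    (F₁ : PiMapOn S₁ A₁ R) (F₂ : PiMapOn S₂ A₂ R)
    (hobj : ∀ x ∈ S₁ ∩ S₂, F₁.obj x = F₂.obj x)
    (hmap : ∀ (x y : V) (l : List V),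
      IsWalkOnFrom (S₁ ∩ S₂) (fun u w => A₁ u w ∧ A₂ u w) x y l →
      ∀ (h₁ : IsWalkOnFrom S₁ A₁ x y l) (h₂ : IsWalkOnFrom S₂ A₂ x y l)
        (ex : F₁.obj x = F₂.obj x) (ey : F₁.obj y = F₂.obj y),
        F₁.map x y l h₁ = eqToHom ex ≫ F₂.map x y l h₂ ≫ eqToHom ey.symm) :
    ∃! F : PiMapOn Set.univ G.Adj R,
      (∀ x ∈ S₁, F.obj x = F₁.obj x) ∧
      (∀ x ∈ S₂, F.obj x = F₂.obj x) ∧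
      (∀ (x y : V) (l : List V) (h₁ : IsWalkOnFrom S₁ A₁ x y l)
        (h : IsWalkOnFrom Set.univ G.Adj x y l)
        (ex : F.obj x = F₁.obj x) (ey : F.obj y = F₁.obj y),
        F.map x y l h = eqToHom ex ≫ F₁.map x y l h₁ ≫ eqToHom ey.symm) ∧
      (∀ (x y : V) (l : List V) (h₂ : IsWalkOnFrom S₂ A₂ x y l)
        (h : IsWalkOnFrom Set.univ G.Adj x y l)
        (ex : F.obj x = F₂.obj x) (ey : F.obj y = F₂.obj y),
        F.map x y l h = eqToHom ex ≫ F₂.map x y l h₂ ≫ eqToHom ey.symm) := by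
  let D : VK.Setup G S₁ S₂ A₁ A₂ R :=
    ⟨F₁, F₂, hA₁S, hA₂S, hA₁symm, hA₂symm, hScover, hAcover, hdiamond, hobj, hmap⟩
  refine ⟨D.toPiMapOn, ⟨fun x hx => D.obj_eq₁ hx, fun x hx => D.obj_eq₂ hx, ?_, ?_⟩, ?_⟩
  · intro x y l h₁ h ex ey
    exact D.mapAux_restrict₁ l x y h₁ h.2.1 h.2.2.1 h.2.2.2 h₁ ex ey
  · intro x y l h₂ h ex ey
    exact D.mapAux_restrict₂ l x y h₂ h.2.1 h.2.2.1 h.2.2.2 h₂ ex ey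
  · rintro F' ⟨q1, q2, q3, q4⟩
    have hobj' : F'.obj = D.toPiMapOn.obj := by
      funext x
      by_cases hx : x ∈ S₁
      · rw [q1 x hx]; exact (D.obj_eq₁ hx).symm
      · have hx2 := D.mem₂_of_not_mem₁ hx
        rw [q2 x hx2]; exact (D.obj_eq₂ hx2).symm
    refine PiMapOn.ext' hobj' ?_
    intro x y l h
    exact D.uniq_map F' hobj' q3 q4 l x y h h.2.1 h.2.2.1 h.2.2.2
end

section
/- If f: G → G is a fold, i.e., f and the identity of G agree on every vertex except a single vertex x, and f(x) ∼ x whenever x ∼ x, then f, viewed as a morphism from G onto its image subgraph Im(f), is a ×-homotopy equivalence: with i: Im(f) → G the inclusion, f∘i ≃ id_{Im(f)} and i∘f ≃ id_G. -/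
variable {V W X : Type}

/-- The image subgraph of an endomorphism `f : G → G`: vertices the range of `f`,
edges the images of edges of `G`. -/
def imageGraph (G : LoopGraph V) (f : V → V) : LoopGraph (Set.range f) where
  Adj a b := ∃ u w : V, G.Adj u w ∧ f u = a.1 ∧ f w = b.1
  symm := fun _ _ ⟨u, w, h, hu, hw⟩ => ⟨w, u, G.symm h, hw, hu⟩

/-- a fold `f : G → G` (agreeing with the identity except at the single
vertex `x₀`, with `f x₀ ∼ x₀` if `x₀` is looped) is a ×-homotopy equivalence from `G`
onto its image: the corestriction of `f` and the inclusion are morphisms, the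
composite on `Im(f)` is ×-homotopic to the identity, and the composite on `G`
(which is `f` itself) is ×-homotopic to the identity. -/
theorem stmt18 (G : LoopGraph V) (f : V → V) (x₀ : V)
    (hf : IsHom G G f)
    (hfold : ∀ u : V, u ≠ x₀ → f u = u)
    (hloop : G.Adj x₀ x₀ → G.Adj (f x₀) x₀) :
    IsHom G (imageGraph G f) (fun v => ⟨f v, v, rfl⟩) ∧
    IsHom (imageGraph G f) G Subtype.val ∧
    Homotopic (imageGraph G f) (imageGraph G f) (fun a => ⟨f a.1, a.1, rfl⟩) id ∧
    Homotopic G G f id := by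
  have key : ∀ u v, G.Adj u v → G.Adj (f u) v := by
    intro u v h
    by_cases hu : u = x₀
    · by_cases hv : v = x₀
      · rw [hu, hv] at h ⊢; exact hloop h
      · have := hf h; rw [hu]; rwa [hfold v hv, hu] at this
    · rw [hfold u hu]; exact h
  have h1 : IsHom G (imageGraph G f) (fun v => ⟨f v, v, rfl⟩) := by
    intro u v h
    exact ⟨u, v, h, rfl, rfl⟩
  have h2 : IsHom (imageGraph G f) G Subtype.val := by
    rintro a b ⟨u, w, h, hu, hw⟩
    rw [← hu, ← hw]; exact hf h
  refine ⟨h1, h2, ?_, ?_⟩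
  · refine Relation.ReflTransGen.single ⟨?_, ?_, ?_⟩
    · rintro a b ⟨u, w, h, hu, hw⟩
      exact ⟨f u, f w, hf h, by rw [hu], by rw [hw]⟩
    · exact fun h => h
    · rintro a b ⟨u, w, h, hu, hw⟩
      refine ⟨f u, w, key u w h, by rw [hu], hw⟩
  · refine Relation.ReflTransGen.single ⟨hf, fun h => h, key⟩
end
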